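/- The map Φ_C is well defined: for every (μ)(ν) ∈ X_C^{*2}, the pair (μ̃)(ν̃) defined by μ̃_1 = μ_1, μ̃_{i+1} = ⌊(μ_{i+1}+ν_i+1)/2⌋ if ν_i < μ_{i+1}−1 and μ̃_{i+1} = μ_{i+1} otherwise, ν̃_i = ⌊(μ_{i+1}+ν_i)/2⌋ if ν_i < μ_{i+1}−1 and ν̃_i = ν_i otherwise, is a pair of partitions lying in X_C^1 (i.e. μ̃_{i+1}−1 ≤ ν̃_i ≤ μ̃_i+1 for all i), and moreover |μ̃|+|ν̃| = |μ|+|ν|. -/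

import Mathlib

open Finset

/-- A partition: weakly decreasing, finitely supported sequence of naturals (0-indexed). -/
def IsPartition (μ : ℕ → ℕ) : Prop :=
  Antitone μ ∧ ∃ N, ∀ i, N ≤ i → μ i = 0

/-- Membership in `P_2(n)`: a pair of partitions of total size `n`. -/
def PairP2 (n : ℕ) (p : (ℕ → ℕ) × (ℕ → ℕ)) : Prop :=
  IsPartition p.1 ∧ IsPartition p.2 ∧
    ∃ N, (∀ i, N ≤ i → p.1 i = 0 ∧ p.2 i = 0) ∧
      (∑ i ∈ range N, (p.1 i + p.2 i)) = n

/-- The dominance-type order on pairs of partitions (0-indexed: `p.1 0` is `μ_1`). -/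
def PairLE (p q : (ℕ → ℕ) × (ℕ → ℕ)) : Prop :=
  (∀ j, ∑ i ∈ range j, (p.1 i + p.2 i) ≤ ∑ i ∈ range j, (q.1 i + q.2 i)) ∧
  (∀ j, (∑ i ∈ range j, (p.1 i + p.2 i)) + p.1 j ≤
        (∑ i ∈ range j, (q.1 i + q.2 i)) + q.1 j)

/-- The map `Φ_C` on pairs of partitions (0-indexed). -/
def PhiC (p : (ℕ → ℕ) × (ℕ → ℕ)) : (ℕ → ℕ) × (ℕ → ℕ) :=
  (fun i => match i with
    | 0 => p.1 0
    | j + 1 =>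
        if p.2 j + 1 < p.1 (j + 1) then (p.1 (j + 1) + p.2 j + 1) / 2
        else p.1 (j + 1),
   fun i =>
    if p.2 i + 1 < p.1 (i + 1) then (p.1 (i + 1) + p.2 i) / 2 else p.2 i)

/-- `Φ_C` is well defined: it sends `X_C^{*2}` into `X_C^1` and
preserves the total size. -/
theorem phiC_wellDefined (p : (ℕ → ℕ) × (ℕ → ℕ))
    (h1 : IsPartition p.1) (h2 : IsPartition p.2)
    (hC : ∀ i, p.2 i ≤ p.1 i + 1) :
    IsPartition (PhiC p).1 ∧ IsPartition (PhiC p).2 ∧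
    (∀ i, (PhiC p).1 (i + 1) ≤ (PhiC p).2 i + 1 ∧ (PhiC p).2 i ≤ (PhiC p).1 i + 1) ∧
    (∀ N, (∀ i, N ≤ i → p.1 i = 0 ∧ p.2 i = 0) →
      (∀ i, N ≤ i → (PhiC p).1 i = 0 ∧ (PhiC p).2 i = 0) ∧
      ∑ i ∈ range N, ((PhiC p).1 i + (PhiC p).2 i)
        = ∑ i ∈ range N, (p.1 i + p.2 i)) := by
  obtain ⟨hm, N1, hN1⟩ := h1
  obtain ⟨hn, N2, hN2⟩ := h2
  have hm' : ∀ i j : ℕ, i ≤ j → p.1 j ≤ p.1 i := fun i j h => hm h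
  have hn' : ∀ i j : ℕ, i ≤ j → p.2 j ≤ p.2 i := fun i j h => hn h
  refine ⟨⟨?_, ?_⟩, ⟨?_, ?_⟩, ?_, ?_⟩
  · apply antitone_nat_of_succ_le
    intro i
    match i with
    | 0 =>
      show (if p.2 0 + 1 < p.1 1 then (p.1 1 + p.2 0 + 1) / 2 else p.1 1) ≤ p.1 0
      have h01 := hm' 0 1 (by omega)
      split_ifs with h <;> omega
    | j + 1 =>
      show (if p.2 (j+1) + 1 < p.1 (j+2) then (p.1 (j+2) + p.2 (j+1) + 1) / 2 else p.1 (j+2))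
          ≤ (if p.2 j + 1 < p.1 (j+1) then (p.1 (j+1) + p.2 j + 1) / 2 else p.1 (j+1))
      have ha := hm' (j+1) (j+2) (by omega)
      have hb := hn' j (j+1) (by omega)
      split_ifs with h h' <;> omega
  · refine ⟨N1 + 1, fun i hi => ?_⟩
    match i with
    | 0 => omega
    | j + 1 =>
      show (if p.2 j + 1 < p.1 (j+1) then (p.1 (j+1) + p.2 j + 1) / 2 else p.1 (j+1)) = 0
      have := hN1 (j+1) (by omega)
      split_ifs with h <;> omega
  · apply antitone_nat_of_succ_le
    intro i
    show (if p.2 (i+1) + 1 < p.1 (i+2) then (p.1 (i+2) + p.2 (i+1)) / 2 else p.2 (i+1))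
        ≤ (if p.2 i + 1 < p.1 (i+1) then (p.1 (i+1) + p.2 i) / 2 else p.2 i)
    have ha := hm' (i+1) (i+2) (by omega)
    have hb := hn' i (i+1) (by omega)
    split_ifs with h h' <;> omega
  · refine ⟨N1 + N2, fun i hi => ?_⟩
    show (if p.2 i + 1 < p.1 (i+1) then (p.1 (i+1) + p.2 i) / 2 else p.2 i) = 0
    have h1 := hN1 (i+1) (by omega)
    have h2 := hN2 i (by omega)
    split_ifs with h <;> omega
  · intro i
    constructor
    · show (if p.2 i + 1 < p.1 (i+1) then (p.1 (i+1) + p.2 i + 1) / 2 else p.1 (i+1))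
          ≤ (if p.2 i + 1 < p.1 (i+1) then (p.1 (i+1) + p.2 i) / 2 else p.2 i) + 1
      split_ifs with h <;> omega
    · match i with
      | 0 =>
        show (if p.2 0 + 1 < p.1 1 then (p.1 1 + p.2 0) / 2 else p.2 0) ≤ p.1 0 + 1
        have h01 := hm' 0 1 (by omega)
        have hc := hC 0
        split_ifs with h <;> omega
      | j + 1 =>
        show (if p.2 (j+1) + 1 < p.1 (j+2) then (p.1 (j+2) + p.2 (j+1)) / 2 else p.2 (j+1))
            ≤ (if p.2 j + 1 < p.1 (j+1) then (p.1 (j+1) + p.2 j + 1) / 2 else p.1 (j+1)) + 1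
        have ha := hm' (j+1) (j+2) (by omega)
        have hb := hn' j (j+1) (by omega)
        have hc := hC (j+1)
        split_ifs with h h' <;> omega
  · intro N hN
    constructor
    · intro i hi
      match i with
      | 0 =>
        have h0 := hN 0 hi
        have h1 := hN 1 (by omega)
        constructor
        · exact h0.1
        · show (if p.2 0 + 1 < p.1 1 then (p.1 1 + p.2 0) / 2 else p.2 0) = 0
          split_ifs with h <;> omega
      | j + 1 =>
        have h0 := hN (j+1) hi
        have h1 := hN (j+2) (by omega)
        constructor
        · show (if p.2 j + 1 < p.1 (j+1) then (p.1 (j+1) + p.2 j + 1) / 2 else p.1 (j+1)) = 0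
          split_ifs with h <;> omega
        · show (if p.2 (j+1) + 1 < p.1 (j+2) then (p.1 (j+2) + p.2 (j+1)) / 2 else p.2 (j+1)) = 0
          split_ifs with h <;> omega
    · match N with
      | 0 => simp
      | M + 1 =>
        have key : ∀ j, (PhiC p).1 (j+1) + (PhiC p).2 j = p.1 (j+1) + p.2 j := by
          intro j
          show (if p.2 j + 1 < p.1 (j+1) then (p.1 (j+1) + p.2 j + 1) / 2 else p.1 (j+1))
              + (if p.2 j + 1 < p.1 (j+1) then (p.1 (j+1) + p.2 j) / 2 else p.2 j)
              = p.1 (j+1) + p.2 j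
          split_ifs with h <;> omega
        have hg : (PhiC p).2 M = p.2 M := by
          have := hN (M+1) (by omega)
          show (if p.2 M + 1 < p.1 (M+1) then (p.1 (M+1) + p.2 M) / 2 else p.2 M) = p.2 M
          split_ifs with h <;> omega
        have e1 : ∑ i ∈ range (M+1), ((PhiC p).1 i + (PhiC p).2 i)
            = (∑ i ∈ range M, ((PhiC p).1 (i+1) + (PhiC p).2 i)) + ((PhiC p).1 0 + (PhiC p).2 M) := by
          rw [Finset.sum_add_distrib, Finset.sum_range_succ' (PhiC p).1,
            Finset.sum_range_succ (PhiC p).2, Finset.sum_add_distrib]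
          ring
        have e2 : ∑ i ∈ range (M+1), (p.1 i + p.2 i)
            = (∑ i ∈ range M, (p.1 (i+1) + p.2 i)) + (p.1 0 + p.2 M) := by
          rw [Finset.sum_add_distrib, Finset.sum_range_succ' p.1,
            Finset.sum_range_succ p.2, Finset.sum_add_distrib]
          ring
        rw [e1, e2, Finset.sum_congr rfl (fun j _ => key j), hg]
        rfl
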